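/- For any quaternionic spinor κ, the 2×2 quaternionic matrix with first column κ and second column −κ̌/|κ|² is a Clifford matrix (its columns are quaternionic spinors and its pseudo-determinant is 1). -/

import Mathlib

open Quaternion

noncomputable section

/-- The involution `q* = a + bi + cj - dk` on quaternions (Clifford reversion). -/
def qstar (q : ℍ[ℝ]) : ℍ[ℝ] := ⟨q.re, q.imI, q.imJ, -q.imK⟩

/-- The involution `q' = a - bi - cj + dk` on quaternions. -/
def qprime (q : ℍ[ℝ]) : ℍ[ℝ] := ⟨q.re, -q.imI, -q.imJ, q.imK⟩

/-- A paravector is an element of `ℝ + ℝi + ℝj`, i.e. a quaternion with zero `k`-component. -/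
def IsParavector (q : ℍ[ℝ]) : Prop := q.imK = 0

/-- The quaternion `k`. -/
def qk : ℍ[ℝ] := ⟨0, 0, 0, 1⟩

/-- A quaternionic spinor: a pair `(ξ, η) ≠ (0,0)` with `ξ * conj η` a paravector. -/
def IsSpinor (κ : ℍ[ℝ] × ℍ[ℝ]) : Prop := κ ≠ 0 ∧ IsParavector (κ.1 * star κ.2)

/-- The bracket `{κ₁, κ₂} = ξ₁* η₂ − η₁* ξ₂`. -/
def bracket (κ₁ κ₂ : ℍ[ℝ] × ℍ[ℝ]) : ℍ[ℝ] := qstar κ₁.1 * κ₂.2 - qstar κ₁.2 * κ₂.1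

/-- Right multiplication `κ x = (ξ x, η x)`. -/
def rmul (κ : ℍ[ℝ] × ℍ[ℝ]) (x : ℍ[ℝ]) : ℍ[ℝ] × ℍ[ℝ] := (κ.1 * x, κ.2 * x)

/-- The complementary pair `κ̌ = (η', −ξ')`. -/
def qcheck (κ : ℍ[ℝ] × ℍ[ℝ]) : ℍ[ℝ] × ℍ[ℝ] := (qprime κ.2, -qprime κ.1)

/-- The real inner product on `ℍ²`: `⟨κ₁, κ₂⟩ = Re (ξ₁ ξ̄₂ + η₁ η̄₂)`. -/
def qinner (κ₁ κ₂ : ℍ[ℝ] × ℍ[ℝ]) : ℝ := (κ₁.1 * star κ₂.1 + κ₁.2 * star κ₂.2).re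

/-- The squared norm `|κ|² = |ξ|² + |η|²` on `ℍ²`. -/
def qnsq (κ : ℍ[ℝ] × ℍ[ℝ]) : ℝ := Quaternion.normSq κ.1 + Quaternion.normSq κ.2

/-- The pseudo-determinant of a 2×2 quaternionic matrix: `pdet [[a,b],[c,d]] = a* d − c* b`. -/
def pdet (A : Matrix (Fin 2) (Fin 2) ℍ[ℝ]) : ℍ[ℝ] := qstar (A 0 0) * A 1 1 - qstar (A 1 0) * A 0 1

/-- A Clifford matrix: columns are quaternionic spinors and the pseudo-determinant is 1. -/
def IsClifford (A : Matrix (Fin 2) (Fin 2) ℍ[ℝ]) : Prop :=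
  IsSpinor (A 0 0, A 1 0) ∧ IsSpinor (A 0 1, A 1 1) ∧ pdet A = 1

/-- Matrix-vector action of a 2×2 quaternionic matrix on a column vector in `ℍ²`. -/
def mact (A : Matrix (Fin 2) (Fin 2) ℍ[ℝ]) (κ : ℍ[ℝ] × ℍ[ℝ]) : ℍ[ℝ] × ℍ[ℝ] :=
  (A 0 0 * κ.1 + A 0 1 * κ.2, A 1 0 * κ.1 + A 1 1 * κ.2)
@[simp] lemma qprime_re (q : ℍ[ℝ]) : (qprime q).re = q.re := rfl
@[simp] lemma qprime_imI (q : ℍ[ℝ]) : (qprime q).imI = -q.imI := rfl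
@[simp] lemma qprime_imJ (q : ℍ[ℝ]) : (qprime q).imJ = -q.imJ := rfl
@[simp] lemma qprime_imK (q : ℍ[ℝ]) : (qprime q).imK = q.imK := rfl
@[simp] lemma qstar_re (q : ℍ[ℝ]) : (qstar q).re = q.re := rfl
@[simp] lemma qstar_imI (q : ℍ[ℝ]) : (qstar q).imI = q.imI := rfl
@[simp] lemma qstar_imJ (q : ℍ[ℝ]) : (qstar q).imJ = q.imJ := rfl
@[simp] lemma qstar_imK (q : ℍ[ℝ]) : (qstar q).imK = -q.imK := rfl

lemma star_qprime (q : ℍ[ℝ]) : star (qprime q) = qstar q := by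
  ext <;> simp

lemma qstar_mul_qprime (q : ℍ[ℝ]) : qstar q * qprime q = ((normSq q : ℝ) : ℍ[ℝ]) := by
  ext <;> simp [Quaternion.normSq_def', ← Quaternion.coe_pow, Quaternion.re_mul, Quaternion.imI_mul, Quaternion.imJ_mul, Quaternion.imK_mul] <;> ring

lemma qprime_eq_zero {q : ℍ[ℝ]} (h : qprime q = 0) : q = 0 := by
  have h' : q.re = 0 ∧ q.imI = 0 ∧ q.imJ = 0 ∧ q.imK = 0 := by
    simpa [Quaternion.ext_iff, neg_eq_zero] using h
  ext <;> simp [h'.1, h'.2.1, h'.2.2.1, h'.2.2.2]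

lemma imK_qprime_mul (a b : ℍ[ℝ]) :
    (qprime b * star (qprime a)).imK = -(a * star b).imK := by
  simp [Quaternion.imK_mul]
  ring

/-- For any quaternionic spinor `κ`, the matrix with columns `κ` and `−κ̌/|κ|²` is a
Clifford matrix. -/
theorem clifford_with_arbitrary_column (κ : ℍ[ℝ] × ℍ[ℝ]) (hκ : IsSpinor κ) :
    IsClifford !![κ.1, -((qnsq κ)⁻¹ • (qcheck κ).1);
                  κ.2, -((qnsq κ)⁻¹ • (qcheck κ).2)] := by
  obtain ⟨hne, hpar⟩ := hκ
  set n : ℝ := qnsq κ with hn_def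
  have hn : n ≠ 0 := by
    intro h
    apply hne
    have p1 : (0:ℝ) ≤ normSq κ.1 := normSq_nonneg
    have p2 : (0:ℝ) ≤ normSq κ.2 := normSq_nonneg
    have h' : normSq κ.1 + normSq κ.2 = 0 := h
    have h1 : normSq κ.1 = 0 := by linarith
    have h2 : normSq κ.2 = 0 := by linarith
    exact Prod.ext (normSq_eq_zero.mp h1) (normSq_eq_zero.mp h2)
  refine ⟨⟨by simpa using hne, hpar⟩, ⟨?_, ?_⟩, ?_⟩
  · show ((-(n⁻¹ • qprime κ.2), -(n⁻¹ • -qprime κ.1)) : ℍ[ℝ] × ℍ[ℝ]) ≠ 0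
    intro h
    rw [Prod.mk_eq_zero] at h
    obtain ⟨h1, h2⟩ := h
    simp only [neg_eq_zero, smul_eq_zero, inv_eq_zero, neg_neg] at h1 h2
    rcases h1 with h1 | h1; · exact hn h1
    rcases h2 with h2 | h2; · exact hn h2
    exact hne (Prod.ext (qprime_eq_zero h2) (qprime_eq_zero h1))
  · show IsParavector ((-(n⁻¹ • qprime κ.2)) * star (-(n⁻¹ • -qprime κ.1)))
    unfold IsParavector at hpar ⊢
    simp only [star_neg, Quaternion.star_smul, star_trivial, neg_mul_neg, neg_mul, smul_mul_assoc, mul_smul_comm,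
      mul_neg, smul_neg, neg_neg, smul_smul, Quaternion.imK_smul, Quaternion.imK_neg,
      imK_qprime_mul (a := κ.1) (b := κ.2), hpar, mul_zero, smul_zero, neg_zero]
  · show qstar κ.1 * (-(n⁻¹ • -qprime κ.1)) - qstar κ.2 * (-(n⁻¹ • qprime κ.2)) = 1
    rw [smul_neg, neg_neg, mul_smul_comm, mul_neg, mul_smul_comm, sub_neg_eq_add, ← smul_add,
      qstar_mul_qprime, qstar_mul_qprime, ← Quaternion.coe_add]
    have hc : ((normSq κ.1 + normSq κ.2 : ℝ) : ℍ[ℝ]) = ((n : ℝ) : ℍ[ℝ]) := rfl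
    rw [hc]
    ext <;> simp [hn]
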